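/- Let g ≥ 3. The number 2g² + 1 is not a sum of two base g palindromes. -/

import Mathlib

def IsBasePalindrome (g n : ℕ) : Prop := Nat.digits g n = (Nat.digits g n).reverse

lemma pal_not_dvd (g n : ℕ) (hg : 2 ≤ g) (hn : 0 < n)
    (h : Nat.digits g n = (Nat.digits g n).reverse) : ¬ g ∣ n := by
  intro hd
  have hne : Nat.digits g n ≠ [] := Nat.digits_ne_nil_iff_ne_zero.2 hn.ne'
  have hlast := Nat.getLast_digit_ne_zero g hn.ne'
  have hhead : (Nat.digits g n).head? = some (n % g) := by
    rw [Nat.digits_def' (by omega : 1 < g) hn]; rfl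
  have h2 : (Nat.digits g n).head? = (Nat.digits g n).getLast? := by
    conv_lhs => rw [h]
    rw [List.head?_reverse]
  rw [hhead, List.getLast?_eq_getLast hne] at h2
  have hm : n % g = 0 := Nat.dvd_iff_mod_eq_zero.mp hd
  simp [hm] at h2
  exact hlast h2.symm

lemma big_pal_aux (g p q : ℕ) (hg : 3 ≤ g)
    (hp : IsBasePalindrome g p) (hq : IsBasePalindrome g q)
    (hsum : 2 * g ^ 2 + 1 = p + q) (hbig : g ^ 2 < q) : False := by
  have hg1 : 1 < g := by omega
  have hq0 : q ≠ 0 := by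
    have : 0 < g ^ 2 := pow_pos (by omega) 2
    omega
  have hq3 : q < g ^ 3 := by nlinarith
  have hlen3 : (Nat.digits g q).length = 3 := by
    have h1 := Nat.lt_base_pow_length_digits (b := g) (m := q) hg1
    have h2 := Nat.base_pow_length_digits_le g q hg1 hq0
    set L := (Nat.digits g q).length with hL
    have hge : 3 ≤ L := by
      by_contra hc
      have : g ^ L ≤ g ^ 2 := Nat.pow_le_pow_right (by omega) (by omega)
      omega
    have hle : L < 4 := by
      have h3 : g * q < g ^ 4 := by
        calc g * q < g * g ^ 3 := by have := Nat.mul_lt_mul_of_le_of_lt (le_refl g) hq3 (by omega); exact this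
        _ = g ^ 4 := by ring
      have : g ^ L < g ^ 4 := lt_of_le_of_lt h2 h3
      exact (Nat.pow_lt_pow_iff_right hg1).1 this
    omega
  obtain ⟨d0, d1, d2, hl⟩ := List.length_eq_three.1 hlen3
  have hd2 : d2 ≠ 0 := by
    have := Nat.getLast_digit_ne_zero g hq0
    simp [hl] at this ⊢
    exact this
  have heq : d0 = d2 := by
    have := hq
    unfold IsBasePalindrome at this
    rw [hl] at this
    simp at this
    exact this.1
  have hd1 : d1 < g := by
    apply Nat.digits_lt_base hg1
    rw [hl]; simp
  have hqval : q = d0 + d1 * g + d2 * g ^ 2 := by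
    conv_lhs => rw [← Nat.ofDigits_digits g q, hl]
    simp [Nat.ofDigits]
    ring
  -- d2 = 1
  have hd2' : d2 = 1 := by nlinarith [heq, hd2, hqval]
  have hd0' : d0 = 1 := by omega
  have hpval : p + d1 * g = g ^ 2 := by
    have : q = 1 + d1 * g + g ^ 2 := by rw [hqval, hd0', hd2']; ring
    omega
  have hpdvd : g ∣ p := by
    have h1 : g ∣ g ^ 2 := dvd_pow_self g (by omega)
    have h2 : g ∣ d1 * g := Dvd.intro_left d1 rfl
    have : p = g ^ 2 - d1 * g := by omega
    rw [this]
    exact Nat.dvd_sub h1 h2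
  have hppos : 0 < p := by
    have : d1 * g < g ^ 2 := by nlinarith
    omega
  exact pal_not_dvd g p (by omega) hppos hp hpdvd

theorem two_g_sq_plus_one_not_sum_two (g : ℕ) (hg : 3 ≤ g) :
    ¬ ∃ p q : ℕ, IsBasePalindrome g p ∧ IsBasePalindrome g q ∧ 2 * g ^ 2 + 1 = p + q := by
  rintro ⟨p, q, hp, hq, hsum⟩
  rcases le_or_gt q (g ^ 2) with h | h
  · have : g ^ 2 < p := by omega
    exact big_pal_aux g q p hg hq hp (by omega) this
  · exact big_pal_aux g p q hg hp hq hsum h
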